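/- Let G be a finite group and H ⊴ G a normal subgroup such that every inner automorphism of G restricts to an inner automorphism of H. Let M = (m_{πρ}) be the |Irr(H)| × |Irr(G)| matrix with entries m_{πρ} = ⟨π, Res^G_H ρ⟩, the multiplicity of the irreducible H-representation π in the restriction of the irreducible G-representation ρ. Then M M^T = [G : H] · I, where I is the identity matrix of size |Irr(H)|. Equivalently, for all π, π' ∈ Irr(H): Σ_{ρ ∈ Irr(G)} ⟨π, Res ρ⟩⟨π', Res ρ⟩ = [G:H] if π ≅ π' and 0 otherwise. -/

import Mathlib

open CategoryTheory
open scoped Classical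

namespace ResAux

open Module

variable {G : Type} [Group G]
variable {G : Type} [Group G]

def Inv (V : FDRep ℂ G) (p : Submodule ℂ V) : Prop := ∀ (g : G) v, v ∈ p → V.ρ g v ∈ p

noncomputable def subρ (V : FDRep ℂ G) (p : Submodule ℂ V) (hp : Inv V p) :
    Representation ℂ G p where
  toFun g := (V.ρ g).restrict (fun v hv => hp g v hv)
  map_one' := by ext v; simp [LinearMap.restrict_apply]
  map_mul' g h := by ext v; simp [LinearMap.restrict_apply]

noncomputable def subRep (V : FDRep ℂ G) (p : Submodule ℂ V) (hp : Inv V p) : FDRep ℂ G :=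
  FDRep.of (subρ V p hp)

noncomputable def subRepIncl (V : FDRep ℂ G) (p : Submodule ℂ V) (hp : Inv V p) :
    subRep V p hp ⟶ V where
  hom := InducedCategory.homMk (ModuleCat.ofHom p.subtype)
  comm := fun g => by ext v; rfl

/-- The underlying linear map of a morphism of representations. -/
def homL {V W : FDRep ℂ G} (f : V ⟶ W) : (V : Type) →ₗ[ℂ] (W : Type) := f.hom.hom.hom

lemma homL_comm {V W : FDRep ℂ G} (f : V ⟶ W) (g : G) (v : V) :
    homL f (V.ρ g v) = W.ρ g (homL f v) :=
  DFunLike.congr_fun (congrArg (fun φ => φ.hom.hom) (f.comm g)) v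

lemma hom_eq {V W : FDRep ℂ G} (f f' : V ⟶ W) (h : homL f = homL f') : f = f' :=
  Action.hom_ext f f' (FGModuleCat.hom_ext h)

lemma homL_zero {V W : FDRep ℂ G} : homL (0 : V ⟶ W) = 0 := rfl

lemma homL_comp {U V W : FDRep ℂ G} (f : U ⟶ V) (g : V ⟶ W) :
    homL (f ≫ g) = (homL g).comp (homL f) := rfl

lemma homL_id {V : FDRep ℂ G} : homL (𝟙 V) = LinearMap.id := rfl

lemma homL_subRepIncl {V : FDRep ℂ G} (p : Submodule ℂ V) (hp : Inv V p) :
    homL (subRepIncl V p hp) = p.subtype := rfl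

lemma simple_of_irreducible (V : FDRep ℂ G) (h0 : finrank ℂ V ≠ 0)
    (hV : ∀ p : Submodule ℂ V, Inv V p → p = ⊥ ∨ p = ⊤) : Simple V := by
  have : Nontrivial (V : Type) := by
    rw [← Module.finrank_pos_iff (R := ℂ)]
    omega
  constructor
  intro Y f hf
  constructor
  · intro hiso h0'
    obtain ⟨x, y, hxy⟩ := exists_pair_ne (V : Type)
    subst h0'
    have h1 : (inv (0 : Y ⟶ V) ≫ (0 : Y ⟶ V)) = 𝟙 V := IsIso.inv_hom_id _
    rw [Limits.comp_zero] at h1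
    have hz : ∀ v : V, v = 0 := by
      intro v
      have h2 := congrArg (fun (φ : V ⟶ V) => homL φ v) h1
      simp only [homL_zero, homL_id] at h2
      exact h2.symm
    exact hxy ((hz x).trans (hz y).symm)
  · intro hf0
    have hker : Inv Y (LinearMap.ker (homL f)) := by
      intro g v hv
      rw [LinearMap.mem_ker] at hv ⊢
      rw [homL_comm, hv, map_zero]
    have hι0 : subRepIncl Y _ hker = 0 := by
      have hι : subRepIncl Y _ hker ≫ f = 0 ≫ f := by
        rw [Limits.zero_comp]
        apply hom_eq
        rw [homL_comp, homL_zero, homL_subRepIncl]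
        ext x
        exact LinearMap.mem_ker.mp x.2
      exact Mono.right_cancellation _ _ hι
    have hkerbot : LinearMap.ker (homL f) = ⊥ := by
      rw [Submodule.eq_bot_iff]
      intro x hx
      have h3 := congrArg (fun (φ : subRep Y _ hker ⟶ Y) => homL φ ⟨x, hx⟩) hι0
      simp only [homL_zero, LinearMap.zero_apply] at h3
      have h4 : homL (subRepIncl Y _ hker) ⟨x, hx⟩ = x := rfl
      rw [h4] at h3
      exact h3
    have hinj : Function.Injective (homL f) := by
      rw [← LinearMap.ker_eq_bot]; exact hkerbot
    have hrange : Inv V (LinearMap.range (homL f)) := by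
      rintro g v ⟨w, rfl⟩
      exact ⟨Y.ρ g w, homL_comm f g w⟩
    have hrtop : LinearMap.range (homL f) = ⊤ := by
      rcases hV _ hrange with hbot | htop
      · exfalso
        apply hf0
        apply hom_eq
        rw [homL_zero]
        ext v
        have hm : homL f v ∈ LinearMap.range (homL f) := ⟨v, rfl⟩
        rw [hbot, Submodule.mem_bot] at hm
        exact hm
      · exact htop
    have hsurj : Function.Surjective (homL f) := LinearMap.range_eq_top.1 hrtop
    set e := LinearEquiv.ofBijective (homL f) ⟨hinj, hsurj⟩ with he
    have h1 : ∀ w, homL f (e.symm w) = w := fun w => e.apply_symm_apply w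
    refine ⟨⟨⟨InducedCategory.homMk (ModuleCat.ofHom e.symm.toLinearMap), fun g => ?_⟩, ?_, ?_⟩⟩
    · ext v
      show e.symm ((V.ρ g) v) = (Y.ρ g) (e.symm v)
      apply hinj
      show homL f (e.symm ((V.ρ g) v)) = homL f ((Y.ρ g) (e.symm v))
      exact (h1 _).trans
        (((homL_comm f g (e.symm v)).trans (congrArg (V.ρ g) (h1 v))).symm)
    · apply hom_eq
      ext v
      show e.symm (homL f v) = v
      exact e.symm_apply_apply v
    · apply hom_eq
      ext v
      show homL f (e.symm v) = v
      exact h1 v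

variable {G : Type} [Group G]

/-- The operator `∑ g, u g • ρ g` on a representation. -/
noncomputable def Tmap [Fintype G] (u : G → ℂ) (V : FDRep ℂ G) : (V : Type) →ₗ[ℂ] (V : Type) :=
  ∑ g : G, u g • (V.ρ g : (V : Type) →ₗ[ℂ] (V : Type))

variable [Fintype G]

lemma Tmap_equivariant (u : G → ℂ) (hu : ∀ x g : G, u (x * g * x⁻¹) = u g)
    (V : FDRep ℂ G) (x : G) :
    (Tmap u V) ∘ₗ (V.ρ x) = (V.ρ x) ∘ₗ (Tmap u V) := by
  ext v
  simp only [Tmap, LinearMap.comp_apply, LinearMap.sum_apply, LinearMap.smul_apply, map_sum,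
    map_smul]
  refine Fintype.sum_equiv ((MulAut.conj x⁻¹).toEquiv) _ _ fun g => ?_
  simp only [MulEquiv.toEquiv_eq_coe, EquivLike.coe_coe, MulAut.conj_apply, inv_inv]
  rw [show u (x⁻¹ * g * x) = u g by simpa using hu x⁻¹ g]
  congr 1
  rw [← Module.End.mul_apply, ← map_mul, ← Module.End.mul_apply, ← map_mul]
  congr 2
  group

lemma trace_Tmap (u : G → ℂ) (V : FDRep ℂ G) :
    LinearMap.trace ℂ _ (Tmap u V) = ∑ g : G, u g * V.character g := by
  simp only [Tmap, map_sum, map_smul, smul_eq_mul]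
  rfl

lemma Tmap_simple_eq_zero (u : G → ℂ) (hu : ∀ x g : G, u (x * g * x⁻¹) = u g)
    (W : FDRep ℂ G) [Simple W] (hW : ∑ g : G, u g * W.character g = 0) :
    Tmap u W = 0 := by
  have hfr : finrank ℂ (W ⟶ W) = 1 := by
    rw [CategoryTheory.finrank_hom_simple_simple ℂ W W, if_pos ⟨Iso.refl W⟩]
  have hid : (𝟙 W : W ⟶ W) ≠ 0 := id_nonzero W
  set φ : W ⟶ W := ⟨InducedCategory.homMk (ModuleCat.ofHom (Tmap u W)), fun g => by
    ext v
    exact DFunLike.congr_fun (Tmap_equivariant u hu W g) v⟩ with hφ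
  obtain ⟨c, hc⟩ : ∃ c : ℂ, φ = c • 𝟙 W := by
    have := (finrank_eq_one_iff_of_nonzero' (𝟙 W : W ⟶ W) hid).mp hfr φ
    obtain ⟨c, hc⟩ := this
    exact ⟨c, hc.symm⟩
  have hT : Tmap u W = c • LinearMap.id := by
    have := congrArg (fun ψ : W ⟶ W => homL ψ) hc
    exact this
  have htr := trace_Tmap u W
  rw [hT, hW] at htr
  simp only [map_smul, LinearMap.trace_id, smul_eq_mul] at htr
  have hfr0 : (finrank ℂ (W : Type) : ℂ) ≠ 0 := by
    rw [Nat.cast_ne_zero]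
    intro h
    apply hid
    apply hom_eq
    rw [homL_zero]
    have : Subsingleton (W : Type) := by
      rw [← Module.finrank_zero_iff (R := ℂ)]; exact h
    ext v
    exact Subsingleton.elim _ _
  have hc0 : c = 0 := by
    rcases mul_eq_zero.mp htr with h | h
    · exact h
    · exact absurd h hfr0
  rw [hT, hc0, zero_smul]


lemma maschke [Fintype G] (V : FDRep ℂ G) (p : Submodule ℂ V) (hp : Inv V p) :
    ∃ q : Submodule ℂ V, Inv V q ∧ IsCompl p q := by
  obtain ⟨q₀, hq₀⟩ := Submodule.exists_isCompl p
  set π₀ : (V : Type) →ₗ[ℂ] V := p.subtype ∘ₗ (p.projectionOnto q₀ hq₀) with hπ₀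
  have hπ₀p : ∀ v ∈ p, π₀ v = v := by
    intro v hv
    simp [hπ₀, Submodule.projectionOnto_apply_left hq₀ ⟨v, hv⟩]
  have hπ₀mem : ∀ v, π₀ v ∈ p := fun v => (p.projectionOnto q₀ hq₀ v).2
  set e : (V : Type) →ₗ[ℂ] V :=
    (Fintype.card G : ℂ)⁻¹ • ∑ g : G, (V.ρ g⁻¹) ∘ₗ π₀ ∘ₗ (V.ρ g) with he
  have hcard : (Fintype.card G : ℂ) ≠ 0 := Nat.cast_ne_zero.2 Fintype.card_ne_zero
  have hmem : ∀ v, e v ∈ p := by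
    intro v
    simp only [he, LinearMap.smul_apply, LinearMap.sum_apply, LinearMap.comp_apply]
    exact Submodule.smul_mem _ _ (Submodule.sum_mem _ fun g _ =>
      hp g⁻¹ _ (hπ₀mem _))
  have hid : ∀ v ∈ p, e v = v := by
    intro v hv
    have : ∀ g : G, (V.ρ g⁻¹) (π₀ ((V.ρ g) v)) = v := by
      intro g
      rw [hπ₀p _ (hp g v hv), ← Module.End.mul_apply, ← map_mul, inv_mul_cancel, map_one,
        Module.End.one_apply]
    simp only [he, LinearMap.smul_apply, LinearMap.sum_apply, LinearMap.comp_apply, this,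
      Finset.sum_const, Finset.card_univ, ← Nat.cast_smul_eq_nsmul (R := ℂ), smul_smul,
      inv_mul_cancel₀ hcard, one_smul]
  have hequiv : ∀ (x : G), e ∘ₗ (V.ρ x) = (V.ρ x) ∘ₗ e := by
    intro x
    ext v
    simp only [he, LinearMap.comp_apply, LinearMap.smul_apply, LinearMap.sum_apply, map_smul,
      map_sum]
    congr 1
    refine Fintype.sum_equiv (Equiv.mulRight x) _ _ fun g => ?_
    simp only [Equiv.coe_mulRight]
    have h1 : (V.ρ (g * x)) v = (V.ρ g) ((V.ρ x) v) := by
      rw [← Module.End.mul_apply, ← map_mul]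
    have h2 : ∀ w, (V.ρ x) ((V.ρ (g * x)⁻¹) w) = (V.ρ g⁻¹) w := by
      intro w
      rw [← Module.End.mul_apply, ← map_mul, mul_inv_rev, mul_inv_cancel_left]
    rw [h1, h2]
  refine ⟨LinearMap.ker (e.codRestrict p hmem), ?_, ?_⟩
  · intro g v hv
    simp only [LinearMap.mem_ker] at hv ⊢
    apply Subtype.ext
    have : e ((V.ρ g) v) = (V.ρ g) (e v) := by
      rw [← LinearMap.comp_apply, hequiv, LinearMap.comp_apply]
    have hv' : e v = 0 := congrArg Subtype.val hv
    simp [LinearMap.codRestrict_apply, this, hv']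
  · have := LinearMap.isCompl_of_proj (f := e.codRestrict p hmem)
      (fun x => Subtype.ext (by simpa [LinearMap.codRestrict_apply] using hid x x.2))
    exact this


lemma finrank_subRep (V : FDRep ℂ G) (p : Submodule ℂ V) (hp : Inv V p) :
    finrank ℂ (subRep V p hp : Type) = finrank ℂ p := rfl

lemma Tmap_natural (u : G → ℂ) {V W : FDRep ℂ G} (f : V ⟶ W) (v : V) :
    homL f (Tmap u V v) = Tmap u W (homL f v) := by
  simp only [Tmap, LinearMap.sum_apply, LinearMap.smul_apply, map_sum, map_smul]
  exact Finset.sum_congr rfl fun g _ => congrArg _ (homL_comm f g v)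

lemma homL_subRepIncl_apply {V : FDRep ℂ G} (p : Submodule ℂ V) (hp : Inv V p) (x : p) :
    homL (subRepIncl V p hp) x = (x : (V : Type)) := rfl

lemma Tmap_eq_zero {ι : Type} [Fintype ι] (ρ : ι → FDRep ℂ G) [∀ i, Simple (ρ i)]
    (hcomplete : ∀ V : FDRep ℂ G, Simple V → ∃! i : ι, Nonempty (V ≅ ρ i))
    (u : G → ℂ) (hu : ∀ x g : G, u (x * g * x⁻¹) = u g)
    (hzero : ∀ i, ∑ g : G, u g * (ρ i).character g = 0) :
    ∀ (n : ℕ) (V : FDRep ℂ G), finrank ℂ V ≤ n → Tmap u V = 0 := by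
  intro n
  induction n with
  | zero =>
    intro V hV
    have : Subsingleton (V : Type) := by
      rw [← Module.finrank_zero_iff (R := ℂ)]; omega
    ext v
    exact Subsingleton.elim _ _
  | succ n ih =>
    intro V hV
    by_cases hex : ∃ p : Submodule ℂ V, Inv V p ∧ p ≠ ⊥ ∧ p ≠ ⊤
    · obtain ⟨p, hp, hpbot, hptop⟩ := hex
      obtain ⟨q, hq, hcompl⟩ := maschke V p hp
      have hqtop : q ≠ ⊤ := by
        intro h
        apply hpbot
        rw [← le_bot_iff]
        intro v hv
        exact (Submodule.mem_bot ℂ).mpr ((Submodule.mem_bot ℂ).mp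
          (hcompl.disjoint.le_bot ⟨hv, h ▸ Submodule.mem_top⟩))
      have hplt : finrank ℂ p < finrank ℂ (V : Type) :=
        Submodule.finrank_lt hptop
      have hqlt : finrank ℂ q < finrank ℂ (V : Type) :=
        Submodule.finrank_lt hqtop
      have hTp := ih (subRep V p hp) (by rw [finrank_subRep]; omega)
      have hTq := ih (subRep V q hq) (by rw [finrank_subRep]; omega)
      have hzp : ∀ v ∈ p, Tmap u V v = 0 := by
        intro v hv
        have h := Tmap_natural u (subRepIncl V p hp) ⟨v, hv⟩
        rw [hTp] at h
        change homL (subRepIncl V p hp) 0 = _ at h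
        rw [map_zero, homL_subRepIncl_apply] at h
        exact h.symm
      have hzq : ∀ v ∈ q, Tmap u V v = 0 := by
        intro v hv
        have h := Tmap_natural u (subRepIncl V q hq) ⟨v, hv⟩
        rw [hTq] at h
        change homL (subRepIncl V q hq) 0 = _ at h
        rw [map_zero, homL_subRepIncl_apply] at h
        exact h.symm
      ext v
      obtain ⟨a, ha, b, hb, rfl⟩ : ∃ a ∈ p, ∃ b ∈ q, a + b = v := by
        have : v ∈ p ⊔ q := by rw [hcompl.sup_eq_top]; trivial
        exact Submodule.mem_sup.mp this
      rw [map_add, hzp a ha, hzq b hb, add_zero, LinearMap.zero_apply]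
    · push_neg at hex
      by_cases h0 : finrank ℂ (V : Type) = 0
      · have : Subsingleton (V : Type) := by
          rw [← Module.finrank_zero_iff (R := ℂ)]; exact h0
        ext v
        exact Subsingleton.elim _ _
      · have hsimple : Simple V := simple_of_irreducible V h0 (fun p hp => by
          by_cases hb : p = ⊥
          · exact Or.inl hb
          · exact Or.inr (hex p hp hb))
        obtain ⟨i, ⟨e⟩, _⟩ := hcomplete V hsimple
        have hTi : Tmap u (ρ i) = 0 :=
          Tmap_simple_eq_zero u hu (ρ i) (hzero i)
        ext v
        have hnat := Tmap_natural u e.hom v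
        rw [hTi, LinearMap.zero_apply] at hnat
        have h3 : ∀ w, homL e.inv (homL e.hom w) = w := fun w =>
          DFunLike.congr_fun (show (homL e.inv).comp (homL e.hom) = LinearMap.id by
            rw [← homL_comp, e.hom_inv_id, homL_id]) w
        have hinj : Function.Injective (homL e.hom) := by
          intro a b hab
          have h2 := congrArg (homL e.inv) hab
          rw [h3, h3] at h2
          exact h2
        rw [LinearMap.zero_apply]
        apply hinj
        rw [hnat, map_zero]


lemma char_ortho (V W : FDRep ℂ G) [Simple V] [Simple W] :
    ∑ g : G, V.character g * W.character g⁻¹ =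
      if Nonempty (V ≅ W) then (Fintype.card G : ℂ) else 0 := by
  have hcard : (Fintype.card G : ℂ) ≠ 0 := Nat.cast_ne_zero.2 Fintype.card_ne_zero
  letI : Invertible ((Nat.card G : ℂ)) :=
    invertibleOfNonzero (by rw [Nat.card_eq_fintype_card]; exact hcard)
  have h := FDRep.char_orthonormal (k := ℂ) (G := G) V W
  rw [Nat.card_eq_fintype_card] at h
  push_cast at h
  have hite : (if Nonempty (V ≅ W) then (Fintype.card G : ℂ) else 0) =
      (Fintype.card G : ℂ) * (if Nonempty (V ≅ W) then 1 else 0) := by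
    split_ifs <;> simp
  rw [hite, ← h, ← mul_assoc, mul_inv_cancel₀ hcard, one_mul]

lemma iso_index_eq {ι : Type} [Fintype ι] (ρ : ι → FDRep ℂ G) [∀ i, Simple (ρ i)]
    (hcomplete : ∀ V : FDRep ℂ G, Simple V → ∃! i : ι, Nonempty (V ≅ ρ i))
    (i j : ι) (h : Nonempty (ρ i ≅ ρ j)) : i = j := by
  obtain ⟨k, _, huniq⟩ := hcomplete (ρ i) inferInstance
  exact (huniq i ⟨Iso.refl _⟩).trans (huniq j h).symm

lemma class_fn_eq_zero {ι : Type} [Fintype ι] (ρ : ι → FDRep ℂ G) [∀ i, Simple (ρ i)]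
    (hcomplete : ∀ V : FDRep ℂ G, Simple V → ∃! i : ι, Nonempty (V ≅ ρ i))
    (w : G → ℂ) (hw : ∀ x g : G, w (x * g * x⁻¹) = w g)
    (hz : ∀ i, ∑ g : G, w g * (ρ i).character g⁻¹ = 0) : w = 0 := by
  set u : G → ℂ := fun g => w g⁻¹ with hu_def
  have hu : ∀ x g : G, u (x * g * x⁻¹) = u g := by
    intro x g
    simp only [hu_def, mul_inv_rev, inv_inv]
    rw [← mul_assoc]
    exact hw x g⁻¹
  have hzero : ∀ i, ∑ g : G, u g * (ρ i).character g = 0 := by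
    intro i
    rw [← hz i]
    exact Fintype.sum_equiv (Equiv.inv G) _ _ (fun g => by simp [hu_def])
  set Vr : FDRep ℂ G := FDRep.of (Representation.ofMulAction ℂ G G) with hVr
  have hT := Tmap_eq_zero ρ hcomplete u hu hzero (finrank ℂ Vr) Vr le_rfl
  have hux : ∀ x : G, u x = 0 := by
    intro x
    have h1 : Tmap u Vr (MonoidAlgebra.single (1 : G) (1 : ℂ) : Vr) = 0 := by rw [hT]; rfl
    have h2 : ((∑ g : G, u g • (Representation.ofMulAction ℂ G G g))
        (MonoidAlgebra.single (1 : G) (1 : ℂ))).coeff x = u x := by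
      simp only [LinearMap.sum_apply, LinearMap.smul_apply, Representation.ofMulAction_single,
        smul_eq_mul, mul_one]
      rw [MonoidAlgebra.coeff_sum]
      simp only [MonoidAlgebra.coeff_smul, MonoidAlgebra.coeff_single, Finsupp.finset_sum_apply,
        Finsupp.smul_apply, Finsupp.single_apply, smul_eq_mul]
      rw [Finset.sum_eq_single x]
      · simp
      · intro b _ hbx
        simp [hbx]
      · simp
    have h3 : (∑ g : G, u g • (Representation.ofMulAction ℂ G G g))
        (MonoidAlgebra.single (1 : G) (1 : ℂ)) = Tmap u Vr (MonoidAlgebra.single (1 : G) (1 : ℂ) : Vr) := rfl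
    rw [h3, h1] at h2
    exact h2.symm.trans rfl
  funext x
  have := hux x⁻¹
  simp only [hu_def, inv_inv] at this
  exact this

lemma class_fn_decomp {ι : Type} [Fintype ι] (ρ : ι → FDRep ℂ G) [∀ i, Simple (ρ i)]
    (hcomplete : ∀ V : FDRep ℂ G, Simple V → ∃! i : ι, Nonempty (V ≅ ρ i))
    (D : G → ℂ) (hD : ∀ x g : G, D (x * g * x⁻¹) = D g) (g : G) :
    D g = ∑ i : ι, ((Fintype.card G : ℂ)⁻¹ * ∑ x : G, D x * (ρ i).character x⁻¹)
      * (ρ i).character g := by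
  have hcard : (Fintype.card G : ℂ) ≠ 0 := Nat.cast_ne_zero.2 Fintype.card_ne_zero
  set c : ι → ℂ := fun i => (Fintype.card G : ℂ)⁻¹ * ∑ x : G, D x * (ρ i).character x⁻¹
    with hc
  set w : G → ℂ := fun x => D x - ∑ i, c i * (ρ i).character x with hw
  have hwcl : ∀ x y : G, w (x * y * x⁻¹) = w y := by
    intro x y
    simp only [hw, hD, FDRep.char_conj]
  have hz : ∀ j, ∑ x : G, w x * (ρ j).character x⁻¹ = 0 := by
    intro j
    simp only [hw, sub_mul, Finset.sum_sub_distrib]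
    have h1 : ∑ x : G, (∑ i, c i * (ρ i).character x) * (ρ j).character x⁻¹
        = ∑ i, c i * ∑ x : G, (ρ i).character x * (ρ j).character x⁻¹ := by
      simp only [Finset.sum_mul, Finset.mul_sum]
      rw [Finset.sum_comm]
      exact Finset.sum_congr rfl fun i _ => Finset.sum_congr rfl fun x _ => by ring
    rw [h1]
    have h2 : ∀ i, c i * ∑ x : G, (ρ i).character x * (ρ j).character x⁻¹
        = if i = j then c j * (Fintype.card G : ℂ) else 0 := by
      intro i
      rw [char_ortho (ρ i) (ρ j)]
      by_cases hij : i = j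
      · subst hij
        rw [if_pos ⟨Iso.refl _⟩, if_pos rfl]
      · rw [if_neg hij, if_neg, mul_zero]
        intro hne
        exact hij (iso_index_eq ρ hcomplete i j hne)
    simp only [h2]
    rw [Finset.sum_ite_eq' Finset.univ j (fun _ => c j * (Fintype.card G : ℂ))]
    rw [if_pos (Finset.mem_univ j)]
    have h3 : ∑ x : G, D x * (ρ j).character x⁻¹ = c j * (Fintype.card G : ℂ) := by
      rw [hc]
      field_simp
    rw [h3, sub_self]
  have hw0 := class_fn_eq_zero ρ hcomplete w hwcl hz
  have := congrFun hw0 g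
  simp only [hw, Pi.zero_apply, sub_eq_zero] at this
  exact this

end ResAux

/-- The multiplicity `⟨π, Res^G_H ρ⟩` of an irreducible `H`-representation `π` in the
restriction to `H` of a `G`-representation `ρ`, computed as the inner product of
characters `(1/|H|) ∑_{h ∈ H} χ_π(h) χ_ρ(h⁻¹)`. -/
noncomputable def resMultiplicity {G : Type} [Group G] (H : Subgroup G) [Fintype H]
    (π : FDRep ℂ ↥H) (ρ : FDRep ℂ G) : ℂ :=
  (Fintype.card H : ℂ)⁻¹ * ∑ h : H, π.character h * ρ.character ((h⁻¹ : H) : G)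

/-- Let `G` be a finite group and `H ⊴ G` a normal subgroup such that
every inner automorphism of `G` restricts to an inner automorphism of `H`.  Let
`M = (m_{πρ})` be the `|Irr(H)| × |Irr(G)|` matrix of multiplicities
`m_{πρ} = ⟨π, Res^G_H ρ⟩`.  Then `M Mᵀ = [G : H] · I`: for irreducible `H`-representations
`π, π'`, `∑_{ρ ∈ Irr(G)} ⟨π, Res ρ⟩ ⟨π', Res ρ⟩` equals `[G : H]` if `π ≅ π'` and `0`
otherwise. -/
theorem resMultiplicity_orthogonality {G : Type} [Group G] [Fintype G]
    (H : Subgroup G) [Fintype H] [H.Normal]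
    (hinner : ∀ g : G, ∃ h ∈ H, ∀ x ∈ H, g * x * g⁻¹ = h * x * h⁻¹)
    {ι : Type} [Fintype ι] (ρ : ι → FDRep ℂ G) [∀ i, Simple (ρ i)]
    (hcomplete : ∀ V : FDRep ℂ G, Simple V → ∃! i : ι, Nonempty (V ≅ ρ i))
    (π π' : FDRep ℂ ↥H) [Simple π] [Simple π'] :
    ∑ i : ι, resMultiplicity H π (ρ i) * resMultiplicity H π' (ρ i) =
      if Nonempty (π ≅ π') then (H.index : ℂ) else 0 := by
  have hcardH : (Fintype.card H : ℂ) ≠ 0 := Nat.cast_ne_zero.2 Fintype.card_ne_zero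
  have hcardG : (Fintype.card G : ℂ) ≠ 0 := Nat.cast_ne_zero.2 Fintype.card_ne_zero
  have hindex : (H.index : ℂ) * (Fintype.card H : ℂ) = (Fintype.card G : ℂ) := by
    have h1 := Subgroup.index_mul_card H
    rw [Nat.card_eq_fintype_card, Nat.card_eq_fintype_card] at h1
    exact_mod_cast congrArg (Nat.cast : ℕ → ℂ) h1
  have hind0 : (H.index : ℂ) ≠ 0 := by
    intro h
    rw [h, zero_mul] at hindex
    exact hcardG hindex.symm
  have hindex' : (H.index : ℂ) * (Fintype.card G : ℂ)⁻¹ = (Fintype.card H : ℂ)⁻¹ := by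
    rw [← hindex, mul_inv, ← mul_assoc, mul_inv_cancel₀ hind0, one_mul]
  -- the class function on `G` supported on `H` given by the character of π'
  set D : G → ℂ := fun g => if hg : g ∈ H then π'.character ⟨g, hg⟩ else 0 with hD_def
  have hD : ∀ x g : G, D (x * g * x⁻¹) = D g := by
    intro x g
    by_cases hg : g ∈ H
    · have hmem : x * g * x⁻¹ ∈ H := Subgroup.Normal.conj_mem ‹H.Normal› g hg x
      obtain ⟨h, hh, hcon⟩ := hinner x
      rw [hD_def]
      simp only
      rw [dif_pos hmem, dif_pos hg]
      have heq : (⟨x * g * x⁻¹, hmem⟩ : H) = ⟨h, hh⟩ * ⟨g, hg⟩ * (⟨h, hh⟩ : H)⁻¹ := by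
        apply Subtype.ext
        simpa using (hcon g hg)
      rw [heq, FDRep.char_conj]
    · have hmem : ¬(x * g * x⁻¹ ∈ H) := by
        intro hmem
        apply hg
        have h2 := Subgroup.Normal.conj_mem ‹H.Normal› _ hmem x⁻¹
        have h3 : x⁻¹ * (x * g * x⁻¹) * x⁻¹⁻¹ = g := by group
        rwa [h3] at h2
      rw [hD_def]
      simp only
      rw [dif_neg hmem, dif_neg hg]
  -- sums of functions supported on H
  have hsupp : ∀ f : ↥H → ℂ,
      (∑ g : G, if hg : g ∈ H then f ⟨g, hg⟩ else 0) = ∑ h : H, f h := by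
    intro f
    rw [← Finset.sum_filter_add_sum_filter_not Finset.univ (fun g => g ∈ H)]
    have h2 : ∑ g ∈ Finset.univ.filter (fun g => ¬ g ∈ H),
        (if hg : g ∈ H then f ⟨g, hg⟩ else 0) = 0 := by
      apply Finset.sum_eq_zero
      intro g hgmem
      rw [Finset.mem_filter] at hgmem
      rw [dif_neg hgmem.2]
    rw [h2, add_zero]
    rw [Finset.sum_subtype (p := fun g => g ∈ H) (Finset.univ.filter (fun g => g ∈ H))
      (by intro x; simp) (fun g => if hg : g ∈ H then f ⟨g, hg⟩ else 0)]
    apply Finset.sum_congr rfl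
    intro h _
    rw [dif_pos h.2]
  set c : ι → ℂ := fun i =>
    (Fintype.card G : ℂ)⁻¹ * ∑ x : G, D x * (ρ i).character x⁻¹ with hc
  -- c i in terms of the multiplicity of π'
  have hmult : ∀ i, resMultiplicity H π' (ρ i) = (H.index : ℂ) * c i := by
    intro i
    have h1 : ∑ x : G, D x * (ρ i).character x⁻¹
        = ∑ h : H, π'.character h * (ρ i).character ((h⁻¹ : H) : G) := by
      rw [← hsupp (fun h => π'.character h * (ρ i).character ((h⁻¹ : H) : G))]
      apply Finset.sum_congr rfl
      intro g _
      by_cases hg : g ∈ H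
      · rw [hD_def]
        simp only
        rw [dif_pos hg, dif_pos hg]
        congr 1
      · rw [hD_def]
        simp only
        rw [dif_neg hg, dif_neg hg, zero_mul]
    rw [hc]
    simp only
    rw [h1, resMultiplicity, ← mul_assoc, hindex']
  -- decomposition of D in terms of the characters of the ρ i
  have hDdec : ∀ g : G, D g = ∑ i, c i * (ρ i).character g := by
    intro g
    have := ResAux.class_fn_decomp ρ hcomplete D hD g
    rw [this]
  -- the main computation
  have hDval : ∀ h : H, D ((h⁻¹ : H) : G) = π'.character h⁻¹ := by
    intro h
    rw [hD_def]
    simp only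
    rw [dif_pos (h⁻¹ : H).2]
  have key : ∑ i : ι, resMultiplicity H π (ρ i) * resMultiplicity H π' (ρ i)
      = (H.index : ℂ) * ((Fintype.card H : ℂ)⁻¹ *
        ∑ h : H, π.character h * π'.character h⁻¹) := by
    calc ∑ i : ι, resMultiplicity H π (ρ i) * resMultiplicity H π' (ρ i)
        = ∑ i : ι, ((Fintype.card H : ℂ)⁻¹ *
            ∑ h : H, π.character h * (ρ i).character ((h⁻¹ : H) : G)) *
            ((H.index : ℂ) * c i) := by
          exact Finset.sum_congr rfl fun i _ => by rw [hmult i, resMultiplicity]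
      _ = (H.index : ℂ) * ((Fintype.card H : ℂ)⁻¹ *
            ∑ h : H, π.character h * D ((h⁻¹ : H) : G)) := by
          simp only [hDdec]
          simp only [Finset.mul_sum, Finset.sum_mul]
          rw [Finset.sum_comm]
          exact Finset.sum_congr rfl fun h _ => Finset.sum_congr rfl fun i _ => by ring
      _ = (H.index : ℂ) * ((Fintype.card H : ℂ)⁻¹ *
            ∑ h : H, π.character h * π'.character h⁻¹) := by
          simp only [hDval]
  rw [key, ResAux.char_ortho π π']
  split_ifs with hiso
  · rw [inv_mul_cancel₀ hcardH, mul_one]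
  · rw [mul_zero, mul_zero]
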